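/- Let g : M^{d×d} → [0,+∞) be continuous and nonnegative on the closed ball cl(B(I)) = {ξ : ‖ξ − I‖ ≤ 1}, let h : [0,1) → [0,+∞) be convex and continuous with h(t) ≥ C(1/(1−t^α) − 1) for all t ∈ [0,1) (for some C > 0, α > 0), and define f(ξ) = g(ξ) + h(‖ξ−I‖) for ξ ∈ B(I), f(ξ) = +∞ otherwise. Let A : ℝ^d → ℝ be Y-periodic (Y = (0,1)^d) with c ≤ A(x) ≤ c' for all x ∈ ℝ^d, for some 0 < c ≤ c'. Define W₀ : ℝ^d × M^{d×d} → [0,+∞] by W₀(x,ξ) = A(x)·f(ξ + I). Then W₀ satisfies, with respect to the open unit ball C = B(0,1) = {ξ : ‖ξ‖ < 1}: (H1) for every ε > 0 there exists η > 0 such that for every x ∈ ℝ^d, every ξ with W₀(x,ξ) < +∞ and every t ∈ [0,1), 1−t ≤ η implies W₀(x,tξ) ≤ W₀(x,ξ) + ε; (H2) for every compact K ⊆ B(0,1), sup_{x∈ℝ^d} sup_{ξ∈K} W₀(x,ξ) < +∞; (H3) for every s > 0 there exists a compact set K_s ⊆ B(0,1) such that W₀(x,ξ) ≥ s for every x ∈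 ℝ^d and every ξ in the closed unit ball with ξ ∉ K_s. -/

import Mathlib

open scoped Matrix.Norms.L2Operator ENNReal

/-- The translated stored energy `W₀(x,ξ) = A(x) f(ξ + I)` satisfies
(H1), (H2) and (H3) with respect to the open unit ball `B(0,1)`. -/
theorem stmt_14 {d : ℕ} (g : Matrix (Fin d) (Fin d) ℝ → ℝ)
    (hgc : ContinuousOn g (Metric.closedBall (1 : Matrix (Fin d) (Fin d) ℝ) 1))
    (hg0 : ∀ ξ ∈ Metric.closedBall (1 : Matrix (Fin d) (Fin d) ℝ) 1, 0 ≤ g ξ)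
    (h : ℝ → ℝ) (hhconv : ConvexOn ℝ (Set.Ico (0 : ℝ) 1) h)
    (hhcont : ContinuousOn h (Set.Ico (0 : ℝ) 1))
    (hh0 : ∀ t ∈ Set.Ico (0 : ℝ) 1, 0 ≤ h t)
    (C α : ℝ) (hC : 0 < C) (hα : 0 < α)
    (hlow : ∀ t ∈ Set.Ico (0 : ℝ) 1, C * (1 / (1 - t ^ α) - 1) ≤ h t)
    (f : Matrix (Fin d) (Fin d) ℝ → ℝ≥0∞)
    (hf : ∀ ξ, f ξ = if ‖ξ - 1‖ < 1 then ENNReal.ofReal (g ξ + h ‖ξ - 1‖) else ⊤)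
    (A : (Fin d → ℝ) → ℝ) (c c' : ℝ) (hc : 0 < c) (hcc' : c ≤ c')
    (hA : ∀ x, c ≤ A x ∧ A x ≤ c')
    (hAper : ∀ (x : Fin d → ℝ) (z : Fin d → ℤ), A (x + fun i => (z i : ℝ)) = A x)
    (W₀ : (Fin d → ℝ) → Matrix (Fin d) (Fin d) ℝ → ℝ≥0∞)
    (hW₀ : ∀ x ξ, W₀ x ξ = ENNReal.ofReal (A x) * f (ξ + 1)) :
    -- (H1)
    (∀ ε : ℝ, 0 < ε → ∃ η : ℝ, 0 < η ∧ ∀ (x : Fin d → ℝ) (ξ : Matrix (Fin d) (Fin d) ℝ),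
        W₀ x ξ ≠ ⊤ → ∀ t ∈ Set.Ico (0 : ℝ) 1, 1 - t ≤ η →
          W₀ x (t • ξ) ≤ W₀ x ξ + ENNReal.ofReal ε) ∧
    -- (H2)
    (∀ K : Set (Matrix (Fin d) (Fin d) ℝ), IsCompact K →
        K ⊆ Metric.ball (0 : Matrix (Fin d) (Fin d) ℝ) 1 →
          (⨆ x : Fin d → ℝ, ⨆ ξ ∈ K, W₀ x ξ) < ⊤) ∧
    -- (H3)
    (∀ s : ℝ, 0 < s → ∃ K : Set (Matrix (Fin d) (Fin d) ℝ),
        IsCompact K ∧ K ⊆ Metric.ball (0 : Matrix (Fin d) (Fin d) ℝ) 1 ∧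
        ∀ (x : Fin d → ℝ), ∀ ξ ∈ Metric.closedBall (0 : Matrix (Fin d) (Fin d) ℝ) 1,
          ξ ∉ K → ENNReal.ofReal s ≤ W₀ x ξ) := by
  have hc' : (0:ℝ) < c' := lt_of_lt_of_le hc hcc'
  have hA0 : ∀ x, (0:ℝ) < A x := fun x => lt_of_lt_of_le hc (hA x).1
  have hmem : ∀ ξ : Matrix (Fin d) (Fin d) ℝ, ‖ξ‖ ≤ 1 →
      ξ + 1 ∈ Metric.closedBall (1 : Matrix (Fin d) (Fin d) ℝ) 1 := by
    intro ξ hξ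
    rw [Metric.mem_closedBall, dist_eq_norm, add_sub_cancel_right]
    exact hξ
  have hWfin : ∀ (x) (ξ : Matrix (Fin d) (Fin d) ℝ), ‖ξ‖ < 1 →
      W₀ x ξ = ENNReal.ofReal (A x * (g (ξ + 1) + h ‖ξ‖)) := by
    intro x ξ hξ
    rw [hW₀, hf, add_sub_cancel_right, if_pos hξ, ← ENNReal.ofReal_mul (hA0 x).le]
  have hWtop : ∀ (x) (ξ : Matrix (Fin d) (Fin d) ℝ), ¬ ‖ξ‖ < 1 → W₀ x ξ = ⊤ := by
    intro x ξ hξ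
    rw [hW₀, hf, add_sub_cancel_right, if_neg hξ, ENNReal.mul_top]
    exact (ENNReal.ofReal_pos.mpr (hA0 x)).ne'
  have hnn : ∀ ξ : Matrix (Fin d) (Fin d) ℝ, ‖ξ‖ < 1 → 0 ≤ g (ξ + 1) + h ‖ξ‖ :=
    fun ξ hξ => add_nonneg (hg0 _ (hmem ξ hξ.le)) (hh0 _ ⟨norm_nonneg ξ, hξ⟩)
  have h0nn : (0:ℝ) ≤ h 0 := hh0 0 ⟨le_refl _, one_pos⟩
  refine ⟨?_, ?_, ?_⟩
  -- (H1)
  · intro ε hε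
    have hεc : 0 < ε / (2 * c') := by positivity
    have hucont : UniformContinuousOn g (Metric.closedBall (1:Matrix (Fin d) (Fin d) ℝ) 1) :=
      (isCompact_closedBall _ _).uniformContinuousOn_of_continuous hgc
    rw [Metric.uniformContinuousOn_iff] at hucont
    obtain ⟨δ, hδ, hgδ⟩ := hucont (ε / (2*c')) hεc
    refine ⟨min (δ/2) (ε/(2*c')/(h 0 + 1)), by positivity, ?_⟩
    intro x ξ hξtop t ht hη
    have hξ1 : ‖ξ‖ < 1 := by
      by_contra hcon
      exact hξtop (hWtop x ξ hcon)
    obtain ⟨ht0, ht1⟩ := ht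
    have htξ : ‖t • ξ‖ = t * ‖ξ‖ := by
      rw [norm_smul, Real.norm_eq_abs, abs_of_nonneg ht0]
    have htξ1 : ‖t • ξ‖ < 1 := by
      rw [htξ]; nlinarith [norm_nonneg ξ]
    rw [hWfin x _ htξ1, hWfin x _ hξ1, htξ]
    have hd : dist (t • ξ + 1) (ξ + 1) < δ := by
      rw [dist_eq_norm]
      have heq : t • ξ + 1 - (ξ + 1) = (t - 1) • ξ := by
        rw [sub_smul, one_smul]; abel
      rw [heq, norm_smul, Real.norm_eq_abs, abs_of_nonpos (by linarith)]
      have h1 : 1 - t ≤ δ/2 := le_trans hη (min_le_left _ _)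
      nlinarith [norm_nonneg ξ]
    have hg' : g (t • ξ + 1) ≤ g (ξ + 1) + ε/(2*c') := by
      have h2 := hgδ _ (hmem _ htξ1.le) _ (hmem ξ hξ1.le) hd
      rw [Real.dist_eq] at h2
      have h3 := (abs_lt.mp h2).2
      linarith
    have hh' : h (t * ‖ξ‖) ≤ h ‖ξ‖ + ε/(2*c') := by
      have hcv : h (t • ‖ξ‖ + (1 - t) • (0:ℝ)) ≤ t • h ‖ξ‖ + (1 - t) • h 0 :=
        hhconv.2 (⟨norm_nonneg ξ, hξ1⟩ : ‖ξ‖ ∈ Set.Ico (0:ℝ) 1)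
          (⟨le_refl 0, one_pos⟩ : (0:ℝ) ∈ Set.Ico (0:ℝ) 1) ht0 (by linarith) (by ring)
      simp only [smul_eq_mul, mul_zero, add_zero] at hcv
      have hsnn : 0 ≤ h ‖ξ‖ := hh0 _ ⟨norm_nonneg ξ, hξ1⟩
      have hη2 : 1 - t ≤ ε/(2*c')/(h 0 + 1) := le_trans hη (min_le_right _ _)
      have h4 : ε/(2*c')/(h 0 + 1) * h 0 ≤ ε/(2*c') := by
        rw [div_mul_eq_mul_div, div_le_iff₀ (by positivity)]
        nlinarith
      nlinarith [mul_le_mul_of_nonneg_right hη2 h0nn]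
    have hreal : A x * (g (t • ξ + 1) + h (t * ‖ξ‖)) ≤ A x * (g (ξ + 1) + h ‖ξ‖) + ε := by
      have h1 := (hA x).1; have h2 := (hA x).2
      have hc'' : c' * (ε/(2*c')) = ε/2 := by field_simp
      nlinarith [mul_nonneg (sub_nonneg.mpr h2) hεc.le,
        mul_nonneg (by linarith : (0:ℝ) ≤ A x)
          (by linarith : (0:ℝ) ≤ g (ξ + 1) + h ‖ξ‖ + ε/(2*c') + ε/(2*c')
            - (g (t • ξ + 1) + h (t * ‖ξ‖)))]
    calc ENNReal.ofReal (A x * (g (t • ξ + 1) + h (t * ‖ξ‖)))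
        ≤ ENNReal.ofReal (A x * (g (ξ + 1) + h ‖ξ‖) + ε) := ENNReal.ofReal_le_ofReal hreal
      _ ≤ _ + ENNReal.ofReal ε := ENNReal.ofReal_add_le
  -- (H2)
  · intro K hK hKsub
    obtain ⟨Mg, hMg⟩ :=
      (isCompact_closedBall (1:Matrix (Fin d) (Fin d) ℝ) 1).exists_bound_of_continuousOn hgc
    rcases K.eq_empty_or_nonempty with rfl | hne
    · simpa using ENNReal.zero_lt_top
    obtain ⟨ξ₀, hξ₀K, hξ₀⟩ := hK.exists_isMaxOn hne continuous_norm.continuousOn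
    have hr1 : ‖ξ₀‖ < 1 := by simpa [dist_zero_right] using hKsub hξ₀K
    obtain ⟨Mh, hMh⟩ := (isCompact_Icc (a := (0:ℝ)) (b := ‖ξ₀‖)).exists_bound_of_continuousOn
      (hhcont.mono (fun t ht => ⟨ht.1, lt_of_le_of_lt ht.2 hr1⟩))
    refine lt_of_le_of_lt (show _ ≤ ENNReal.ofReal (c' * (Mg + Mh)) from
      iSup_le fun x => iSup₂_le fun ξ hξ => ?_) ENNReal.ofReal_lt_top
    have hξr : ‖ξ‖ ≤ ‖ξ₀‖ := hξ₀ hξ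
    have hξ1 : ‖ξ‖ < 1 := lt_of_le_of_lt hξr hr1
    rw [hWfin x ξ hξ1]
    apply ENNReal.ofReal_le_ofReal
    have hgb : g (ξ + 1) ≤ Mg := le_trans (le_abs_self _) (hMg _ (hmem ξ hξ1.le))
    have hhb : h ‖ξ‖ ≤ Mh := le_trans (le_abs_self _) (hMh _ ⟨norm_nonneg ξ, hξr⟩)
    exact mul_le_mul (hA x).2 (add_le_add hgb hhb) (hnn ξ hξ1) hc'.le
  -- (H3)
  · intro s hs
    have hsc : (0:ℝ) < s + c * C := by positivity
    set b : ℝ := s / (s + c * C) with hb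
    have hbpos : 0 < b := by positivity
    have hb1 : b < 1 := by rw [hb, div_lt_one hsc]; nlinarith
    set r : ℝ := b ^ (1/α) with hrdef
    have hr0 : 0 < r := Real.rpow_pos_of_pos hbpos _
    have hr1 : r < 1 := Real.rpow_lt_one hbpos.le hb1 (by positivity)
    have hrα : r ^ α = b := by
      rw [hrdef, ← Real.rpow_mul hbpos.le, one_div_mul_cancel hα.ne', Real.rpow_one]
    refine ⟨Metric.closedBall 0 r, isCompact_closedBall _ _,
      Metric.closedBall_subset_ball hr1, ?_⟩
    intro x ξ hξcb hξK
    have hξr : r < ‖ξ‖ := by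
      rw [Metric.mem_closedBall, dist_zero_right, not_le] at hξK
      exact hξK
    have hξ1 : ‖ξ‖ ≤ 1 := by simpa [dist_zero_right] using hξcb
    rcases lt_or_eq_of_le hξ1 with hlt | heq
    · rw [hWfin x ξ hlt]
      apply ENNReal.ofReal_le_ofReal
      have hξα : ‖ξ‖ ^ α < 1 := Real.rpow_lt_one (norm_nonneg ξ) hlt hα
      have hrξα : r ^ α ≤ ‖ξ‖ ^ α := Real.rpow_le_rpow hr0.le hξr.le hα.le
      have h2 : 0 < 1 - ‖ξ‖ ^ α := by linarith
      have h1 : 1 - ‖ξ‖ ^ α ≤ 1 - b := by rw [← hrα]; linarith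
      have h4 : 1/(1 - b) ≤ 1/(1 - ‖ξ‖ ^ α) := one_div_le_one_div_of_le h2 h1
      have hval : C * (1 / (1 - b) - 1) = s / c := by
        rw [hb]
        have hcC : c * C ≠ 0 := by positivity
        field_simp
        ring
      have key : s / c ≤ h ‖ξ‖ := by
        have hl := hlow ‖ξ‖ ⟨norm_nonneg ξ, hlt⟩
        nlinarith [mul_le_mul_of_nonneg_left h4 hC.le]
      have hgnn : 0 ≤ g (ξ + 1) := hg0 _ (hmem ξ hξ1)
      have hhnn : 0 ≤ h ‖ξ‖ := hh0 _ ⟨norm_nonneg ξ, hlt⟩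
      have h5 : c * (s / c) = s := by field_simp
      have h6 := (hA x).1
      have h7 : s ≤ c * h ‖ξ‖ := by
        calc s = c * (s / c) := h5.symm
          _ ≤ c * h ‖ξ‖ := mul_le_mul_of_nonneg_left key hc.le
      have h8 : c * h ‖ξ‖ ≤ A x * h ‖ξ‖ := mul_le_mul_of_nonneg_right h6 hhnn
      have h9 : A x * h ‖ξ‖ ≤ A x * (g (ξ + 1) + h ‖ξ‖) :=
        mul_le_mul_of_nonneg_left (by linarith) (hA0 x).le
      linarith
    · rw [hWtop x ξ (by rw [heq]; exact lt_irrefl 1)]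
      exact le_top
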